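/- Let 0 < r₀ < 1, let u : [r₀, 1] × ℝ → ℝ be continuously differentiable and 2π-periodic in its second variable θ, let a ∈ ℝ, and define W(r,θ) := √(1 + ((1−r²)²/4)·(u_r(r,θ)² + u_θ(r,θ)²/r²)). Then the limit as r → 1⁻ of ∫₀^{2π} (1/(2W(r,θ)))·[ ( 4r/(r²−1) + (r²−1)·u_θ(r,θ)²/r )·cos(a−θ) + (r²+1)·u_r(r,θ)·u_θ(r,θ)·sin(a−θ) ] dθ exists and equals ∫₀^{2π} u_r(1,θ)·u_θ(1,θ)·sin(a−θ) dθ. -/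

import Mathlib

open Set Filter intervalIntegral

private lemma flux_aux_identity (r w A B c s : ℝ)
    (hw2 : w ^ 2 = 1 + ((1 - r ^ 2) ^ 2 / 4) * (A ^ 2 + B ^ 2 / r ^ 2))
    (hw : 1 ≤ w) (hr : r ≠ 0) (hr1 : r ^ 2 - 1 ≠ 0) :
    (1 / (2 * w)) * ((4 * r / (r ^ 2 - 1) + (r ^ 2 - 1) * B ^ 2 / r) * c
        + (r ^ 2 + 1) * A * B * s)
    = (-(r * (r ^ 2 - 1) / 2) * (A ^ 2 + B ^ 2 / r ^ 2) * c / (w * (1 + w))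
        + ((r ^ 2 - 1) * B ^ 2 * c / r + (r ^ 2 + 1) * A * B * s) / (2 * w))
      + (2 * r / (r ^ 2 - 1)) * c := by
  have hw0 : w ≠ 0 := by linarith
  have hw1 : 1 + w ≠ 0 := by linarith
  set t : ℝ := A ^ 2 + B ^ 2 / r ^ 2 with ht
  have hsq : 1 - w ^ 2 = -((1 - r ^ 2) ^ 2 / 4 * t) := by linarith
  have h1 : 1 / w - 1 = -((1 - r ^ 2) ^ 2 / 4 * t) / (w * (1 + w)) := by
    rw [← hsq]
    field_simp
    ring
  have key : -(r * (r ^ 2 - 1) / 2) * t * c / (w * (1 + w))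
      = (2 * r / (r ^ 2 - 1)) * c * (1 / w - 1) := by
    rw [h1]; field_simp; ring
  rw [key]; field_simp; ring

private lemma flux_aux_cos (a : ℝ) :
    ∫ θ in (0:ℝ)..(2 * Real.pi), Real.cos (a - θ) = 0 := by
  rw [intervalIntegral.integral_comp_sub_left (fun x => Real.cos x) a]
  rw [integral_cos]
  simp [Real.sin_sub_two_pi, sub_zero]

/-- Boundary limit of the horizontal-dilation flux integral: as `r → 1⁻`, the
flux of the Killing field `H_a` across the circle `|z| = r` converges to
`∫₀^{2π} u_r(1,θ) u_θ(1,θ) sin(a−θ) dθ`. -/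
theorem dilation_flux_boundary_limit
    (r₀ : ℝ) (hr₀ : 0 < r₀) (hr₀1 : r₀ < 1) (a : ℝ)
    (u ur uθ W : ℝ → ℝ → ℝ)
    (hper : ∀ r θ, u r (θ + 2 * Real.pi) = u r θ)
    (hur : ∀ r ∈ Set.Icc r₀ 1, ∀ θ : ℝ,
      HasDerivWithinAt (fun s => u s θ) (ur r θ) (Set.Icc r₀ 1) r)
    (huθ : ∀ r ∈ Set.Icc r₀ 1, ∀ θ : ℝ, HasDerivAt (fun φ => u r φ) (uθ r θ) θ)
    (hcont : ContinuousOn (fun p : ℝ × ℝ => (ur p.1 p.2, uθ p.1 p.2))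
      (Set.Icc r₀ 1 ×ˢ (Set.univ : Set ℝ)))
    (hW : ∀ r θ, W r θ =
      Real.sqrt (1 + ((1 - r ^ 2) ^ 2 / 4) * ((ur r θ) ^ 2 + (uθ r θ) ^ 2 / r ^ 2))) :
    Tendsto (fun r => ∫ θ in (0:ℝ)..(2 * Real.pi),
        (1 / (2 * W r θ)) *
          ((4 * r / (r ^ 2 - 1) + (r ^ 2 - 1) * (uθ r θ) ^ 2 / r) * Real.cos (a - θ)
            + (r ^ 2 + 1) * ur r θ * uθ r θ * Real.sin (a - θ)))
      (nhdsWithin 1 (Set.Ico r₀ 1))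
      (nhds (∫ θ in (0:ℝ)..(2 * Real.pi),
        ur 1 θ * uθ 1 θ * Real.sin (a - θ))) := by
  clear hper hur huθ
  have hπ : (0:ℝ) < 2 * Real.pi := by positivity
  set S : Set (ℝ × ℝ) := Set.Icc r₀ 1 ×ˢ (Set.univ : Set ℝ) with hS
  have hWge : ∀ r θ, 1 ≤ W r θ := by
    intro r θ
    rw [hW, Real.one_le_sqrt]
    have h1 : (0:ℝ) ≤ ((1 - r ^ 2) ^ 2 / 4) * ((ur r θ) ^ 2 + (uθ r θ) ^ 2 / r ^ 2) := by
      positivity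
    linarith
  have hWsq : ∀ r θ, (W r θ) ^ 2
      = 1 + ((1 - r ^ 2) ^ 2 / 4) * ((ur r θ) ^ 2 + (uθ r θ) ^ 2 / r ^ 2) := by
    intro r θ
    rw [hW]
    have h1 : (0:ℝ) ≤ ((1 - r ^ 2) ^ 2 / 4) * ((ur r θ) ^ 2 + (uθ r θ) ^ 2 / r ^ 2) := by
      positivity
    rw [Real.sq_sqrt (by linarith)]
  -- continuity of the pieces
  have hurc : ContinuousOn (fun p : ℝ × ℝ => ur p.1 p.2) S :=
    continuous_fst.comp_continuousOn hcont
  have huθc : ContinuousOn (fun p : ℝ × ℝ => uθ p.1 p.2) S :=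
    continuous_snd.comp_continuousOn hcont
  have hr0 : ∀ p : ℝ × ℝ, p ∈ S → p.1 ≠ 0 := by
    rintro ⟨r, θ⟩ ⟨hr, -⟩
    exact ne_of_gt (lt_of_lt_of_le hr₀ hr.1)
  have hWc : ContinuousOn (fun p : ℝ × ℝ => W p.1 p.2) S := by
    have heq : (fun p : ℝ × ℝ => W p.1 p.2) = fun p : ℝ × ℝ =>
        Real.sqrt (1 + ((1 - p.1 ^ 2) ^ 2 / 4) * ((ur p.1 p.2) ^ 2 + (uθ p.1 p.2) ^ 2 / p.1 ^ 2)) :=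
      funext fun p => hW p.1 p.2
    rw [heq]
    apply Real.continuous_sqrt.comp_continuousOn
    apply ContinuousOn.add continuousOn_const
    apply ContinuousOn.mul (by fun_prop)
    exact (hurc.pow 2).add ((huθc.pow 2).div (by fun_prop)
      (fun p hp => pow_ne_zero 2 (hr0 p hp)))
  -- the regularized integrand
  set G : ℝ × ℝ → ℝ := fun p =>
    -(p.1 * (p.1 ^ 2 - 1) / 2) * ((ur p.1 p.2) ^ 2 + (uθ p.1 p.2) ^ 2 / p.1 ^ 2)
        * Real.cos (a - p.2) / (W p.1 p.2 * (1 + W p.1 p.2))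
      + ((p.1 ^ 2 - 1) * (uθ p.1 p.2) ^ 2 * Real.cos (a - p.2) / p.1
          + (p.1 ^ 2 + 1) * ur p.1 p.2 * uθ p.1 p.2 * Real.sin (a - p.2)) / (2 * W p.1 p.2)
    with hG
  have hWne : ∀ p : ℝ × ℝ, W p.1 p.2 * (1 + W p.1 p.2) ≠ 0 := by
    intro p
    have h1 := hWge p.1 p.2
    have : (0:ℝ) < W p.1 p.2 * (1 + W p.1 p.2) := by nlinarith
    exact ne_of_gt this
  have hWne2 : ∀ p : ℝ × ℝ, 2 * W p.1 p.2 ≠ 0 := by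
    intro p
    have h1 := hWge p.1 p.2
    exact ne_of_gt (by linarith)
  have hGc : ContinuousOn G S := by
    apply ContinuousOn.add
    · apply ContinuousOn.div
      · apply ContinuousOn.mul
        · apply ContinuousOn.mul (by fun_prop)
          exact (hurc.pow 2).add ((huθc.pow 2).div (by fun_prop)
            (fun p hp => pow_ne_zero 2 (hr0 p hp)))
        · fun_prop
      · exact hWc.mul (continuousOn_const.add hWc)
      · exact fun p _ => hWne p
    · apply ContinuousOn.div
      · apply ContinuousOn.add
        · exact ContinuousOn.div (by fun_prop) (by fun_prop) (fun p hp => hr0 p hp)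
        · fun_prop
      · exact continuousOn_const.mul hWc
      · exact fun p _ => hWne2 p
  -- value at the boundary r = 1
  have hG1 : ∀ θ, G (1, θ) = ur 1 θ * uθ 1 θ * Real.sin (a - θ) := by
    intro θ
    have hW1 : W 1 θ = 1 := by rw [hW]; norm_num
    simp only [hG, hW1]
    norm_num
    ring
  -- slices are continuous
  have hGr : ∀ r ∈ Set.Icc r₀ 1, Continuous fun θ => G (r, θ) := by
    intro r hr
    rw [← continuousOn_univ]
    exact hGc.comp (Continuous.continuousOn (Continuous.prodMk_right r))
      (fun θ _ => ⟨hr, mem_univ θ⟩)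
  -- the pointwise identity on Ico r₀ 1
  have hident : ∀ r ∈ Set.Ico r₀ 1, ∀ θ : ℝ,
      (1 / (2 * W r θ)) *
          ((4 * r / (r ^ 2 - 1) + (r ^ 2 - 1) * (uθ r θ) ^ 2 / r) * Real.cos (a - θ)
            + (r ^ 2 + 1) * ur r θ * uθ r θ * Real.sin (a - θ))
        = G (r, θ) + (2 * r / (r ^ 2 - 1)) * Real.cos (a - θ) := by
    intro r hr θ
    have hrpos : 0 < r := lt_of_lt_of_le hr₀ hr.1
    have hr1 : r ^ 2 - 1 ≠ 0 := by nlinarith [hr.2]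
    exact flux_aux_identity r (W r θ) (ur r θ) (uθ r θ) (Real.cos (a - θ)) (Real.sin (a - θ))
      (hWsq r θ) (hWge r θ) (ne_of_gt hrpos) hr1
  -- equality of integrals on Ico r₀ 1
  have hinteq : ∀ r ∈ Set.Ico r₀ 1,
      (∫ θ in (0:ℝ)..(2 * Real.pi),
        (1 / (2 * W r θ)) *
          ((4 * r / (r ^ 2 - 1) + (r ^ 2 - 1) * (uθ r θ) ^ 2 / r) * Real.cos (a - θ)
            + (r ^ 2 + 1) * ur r θ * uθ r θ * Real.sin (a - θ)))
      = ∫ θ in (0:ℝ)..(2 * Real.pi), G (r, θ) := by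
    intro r hr
    have h1 : (∫ θ in (0:ℝ)..(2 * Real.pi),
        (1 / (2 * W r θ)) *
          ((4 * r / (r ^ 2 - 1) + (r ^ 2 - 1) * (uθ r θ) ^ 2 / r) * Real.cos (a - θ)
            + (r ^ 2 + 1) * ur r θ * uθ r θ * Real.sin (a - θ)))
        = ∫ θ in (0:ℝ)..(2 * Real.pi),
            (G (r, θ) + (2 * r / (r ^ 2 - 1)) * Real.cos (a - θ)) := by
      apply intervalIntegral.integral_congr
      intro θ _
      exact hident r hr θ
    have hc2 : Continuous fun θ : ℝ => 2 * r / (r ^ 2 - 1) * Real.cos (a - θ) := by fun_prop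
    rw [h1, intervalIntegral.integral_add
      ((hGr r (Set.Ico_subset_Icc_self hr)).intervalIntegrable 0 (2 * Real.pi))
      (hc2.intervalIntegrable 0 (2 * Real.pi)),
      intervalIntegral.integral_const_mul, flux_aux_cos a]
    ring
  -- bound on the compact set
  have hKsub : (Set.Icc r₀ 1 ×ˢ Set.Icc 0 (2 * Real.pi)) ⊆ S := by
    rintro ⟨r, θ⟩ ⟨h1, h2⟩
    exact ⟨h1, mem_univ θ⟩
  obtain ⟨M, hM⟩ := (isCompact_Icc.prod isCompact_Icc).exists_bound_of_continuousOn
    (hGc.mono hKsub)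
  -- dominated convergence
  have hDCT : Tendsto (fun r => ∫ θ in (0:ℝ)..(2 * Real.pi), G (r, θ))
      (nhdsWithin 1 (Set.Ico r₀ 1))
      (nhds (∫ θ in (0:ℝ)..(2 * Real.pi), ur 1 θ * uθ 1 θ * Real.sin (a - θ))) := by
    apply intervalIntegral.tendsto_integral_filter_of_dominated_convergence
      (fun _ : ℝ => M)
    · filter_upwards [self_mem_nhdsWithin] with r hr
      exact (hGr r (Set.Ico_subset_Icc_self hr)).aestronglyMeasurable
    · filter_upwards [self_mem_nhdsWithin] with r hr
      apply Filter.Eventually.of_forall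
      intro θ hθ
      rw [Set.uIoc_of_le hπ.le] at hθ
      exact hM (r, θ) ⟨Set.Ico_subset_Icc_self hr, Set.Ioc_subset_Icc_self hθ⟩
    · exact intervalIntegrable_const
    · apply Filter.Eventually.of_forall
      intro θ _
      have h1mem : ((1:ℝ), θ) ∈ S := ⟨⟨le_of_lt hr₀1, le_refl 1⟩, mem_univ θ⟩
      have h2 : ContinuousWithinAt (fun r : ℝ => ((r, θ) : ℝ × ℝ)) (Set.Ico r₀ 1) 1 :=
        Continuous.continuousWithinAt (by fun_prop)
      have hcw : ContinuousWithinAt (fun r : ℝ => G (r, θ)) (Set.Ico r₀ 1) 1 :=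
        ContinuousWithinAt.comp (f := fun r : ℝ => ((r, θ) : ℝ × ℝ)) (x := 1)
          (hGc (1, θ) h1mem) h2
          (fun r hr => ⟨Set.Ico_subset_Icc_self hr, mem_univ θ⟩)
      have := hcw.tendsto
      rwa [hG1 θ] at this
  apply hDCT.congr'
  filter_upwards [self_mem_nhdsWithin] with r hr
  exact (hinteq r hr).symm
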